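/- Let D ⊆ F_q^{2d} and for t ∈ F_q let ν(t) be the number of pairs (x,y) ∈ D × D with ||x − y|| = t. Then Σ_{t ∈ F_q} ν(t)² ≤ |D|⁴/q + q^{6d} Σ_{M ∈ F_q^{4d}, ||M||_* = 0} |(D × D)^(M)|². -/

import Mathlib

open Finset

/-- `||x|| = ∑ x_i²`. -/
def nrm {F : Type} [Field F] {n : ℕ} (x : Fin n → F) : F := ∑ i, x i ^ 2

/-- `||M||_* = ||m|| - ||m'||` for `M = (m, m') ∈ F_q^{2d} × F_q^{2d}`. -/
def nrmStar {F : Type} [Field F] {n : ℕ} (M : (Fin n → F) × (Fin n → F)) : F :=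
  nrm M.1 - nrm M.2

/-- The Fourier transform of the indicator of `D × D ⊆ F_q^{4d}`. -/
noncomputable def ftDD {F : Type} [Field F] [Fintype F] {n : ℕ} (χ : AddChar F ℂ)
    (D : Finset (Fin n → F)) (M : (Fin n → F) × (Fin n → F)) : ℂ :=
  ((Fintype.card F : ℂ) ^ (2 * n))⁻¹ *
    ∑ X ∈ D ×ˢ D, χ (-((∑ i, M.1 i * X.1 i) + ∑ i, M.2 i * X.2 i))

set_option linter.unusedSectionVars false
set_option linter.unusedVariables false

variable {F : Type} [Field F] [Fintype F] [DecidableEq F] {χ : AddChar F ℂ}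

lemma ortho (hχ : χ ≠ 1) (a : F) :
    ∑ s : F, χ (s * a) = if a = 0 then (Fintype.card F : ℂ) else 0 := by
  simpa using AddChar.sum_mulShift a (AddChar.IsPrimitive.of_ne_one hχ)

lemma chi_sum {ι : Type*} (s : Finset ι) (f : ι → F) :
    χ (∑ i ∈ s, f i) = ∏ i ∈ s, χ (f i) := by
  classical
  induction s using Finset.cons_induction with
  | empty => simp
  | cons a s ha ih => rw [Finset.sum_cons, Finset.prod_cons, AddChar.map_add_eq_mul, ih]

lemma conj_chi (a : F) : (starRingEnd ℂ) (χ a) = χ (-a) := by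
  have hR : 0 < ringChar F := Nat.pos_of_ne_zero (CharP.ringChar_ne_zero_of_finite F)
  rw [AddChar.starComp_apply hR, AddChar.inv_apply]

lemma card_odd_two_ne_zero (hodd : Odd (Fintype.card F)) : (2 : F) ≠ 0 := by
  intro h
  obtain ⟨k, hk⟩ := hodd
  have h0 : ((Fintype.card F : ℕ) : F) = 0 := FiniteField.cast_card_eq_zero F
  rw [hk] at h0
  push_cast at h0
  rw [h] at h0
  simp at h0

def sqEquiv (h2 : (2 : F) ≠ 0) : F × F ≃ F × F where
  toFun p := (p.1 - p.2, p.1 + p.2)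
  invFun p := ((p.1 + p.2) * (2 : F)⁻¹, (p.2 - p.1) * (2 : F)⁻¹)
  left_inv p := by ext <;> field_simp <;> ring
  right_inv p := by ext <;> field_simp <;> ring

lemma gauss_mul (hχ : χ ≠ 1) (h2 : (2 : F) ≠ 0) {s : F} (hs : s ≠ 0) :
    (∑ a : F, χ (s * a ^ 2)) * (∑ b : F, χ (-(s * b ^ 2))) = (Fintype.card F : ℂ) := by
  rw [Finset.sum_mul_sum]
  have key : ∀ a b : F, χ (s * a ^ 2) * χ (-(s * b ^ 2)) = χ (s * (a - b) * (a + b)) := by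
    intro a b; rw [← AddChar.map_add_eq_mul]; congr 1; ring
  simp_rw [key]
  calc ∑ a : F, ∑ b : F, χ (s * (a - b) * (a + b))
      = ∑ p : F × F, χ (s * (p.1 - p.2) * (p.1 + p.2)) :=
        by rw [Fintype.sum_prod_type]
    _ = ∑ p : F × F, χ (s * p.1 * p.2) := by
        refine Finset.sum_nbij' (fun p : F × F => (p.1 - p.2, p.1 + p.2))
          (fun p : F × F => ((p.1 + p.2) * (2 : F)⁻¹, (p.2 - p.1) * (2 : F)⁻¹))
          (by simp) (by simp) ?_ ?_ (fun p _ => rfl)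
        · intro p _; ext <;> field_simp <;> ring
        · intro p _; ext <;> field_simp <;> ring
    _ = ∑ u : F, ∑ v : F, χ (s * u * v) := by rw [Fintype.sum_prod_type]
    _ = ∑ u : F, ∑ v : F, χ (v * (s * u)) := by
        refine Finset.sum_congr rfl fun u _ => Finset.sum_congr rfl fun v _ => ?_
        congr 1; ring
    _ = ∑ u : F, if s * u = 0 then (Fintype.card F : ℂ) else 0 :=
        Finset.sum_congr rfl fun u _ => ortho hχ (s * u)
    _ = (Fintype.card F : ℂ) := by simp [mul_eq_zero, hs]

lemma complete_sq (h2 : (2 : F) ≠ 0) {s : F} (hs : s ≠ 0) (c : F) :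
    ∑ x : F, χ (s * x ^ 2 + x * c)
      = χ (-(c ^ 2 * (4 * s)⁻¹)) * ∑ a : F, χ (s * a ^ 2) := by
  have h4 : (4 : F) ≠ 0 := by
    have h : (4 : F) = 2 * 2 := by norm_num
    rw [h]; exact mul_ne_zero h2 h2
  rw [Finset.mul_sum]
  rw [← Equiv.sum_comp (Equiv.subRight (c * (2 * s)⁻¹)) (fun x => χ (s * x ^ 2 + x * c))]
  refine Finset.sum_congr rfl fun a _ => ?_
  rw [← AddChar.map_add_eq_mul]
  show χ (s * (a - c * (2 * s)⁻¹) ^ 2 + (a - c * (2 * s)⁻¹) * c) = _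
  congr 1
  field_simp
  ring

lemma vec_ortho (hχ : χ ≠ 1) {k : ℕ} (u : Fin k → F) :
    ∑ m : Fin k → F, χ (∑ i, m i * u i)
      = if u = 0 then ((Fintype.card F : ℂ)) ^ k else 0 := by
  simp_rw [chi_sum]
  rw [← Fintype.piFinset_univ,
    Finset.sum_prod_piFinset univ (fun (i : Fin k) (y : F) => χ (y * u i))]
  simp_rw [ortho hχ]
  by_cases hu : u = 0
  · subst hu; simp
  · rw [if_neg hu]
    obtain ⟨i, hi⟩ := Function.ne_iff.mp hu
    exact Finset.prod_eq_zero (mem_univ i) (if_neg hi)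

lemma vec_complete (hχ : χ ≠ 1) (h2 : (2 : F) ≠ 0) {k : ℕ} {s : F} (hs : s ≠ 0)
    (u : Fin k → F) :
    ∑ m : Fin k → F, χ (s * nrm m + ∑ i, m i * u i)
      = χ (-(nrm u * (4 * s)⁻¹)) * (∑ a : F, χ (s * a ^ 2)) ^ k := by
  have h1 : ∀ m : Fin k → F,
      s * nrm m + ∑ i, m i * u i = ∑ i, (s * m i ^ 2 + m i * u i) := by
    intro m; rw [nrm, Finset.mul_sum, ← Finset.sum_add_distrib]
  simp_rw [h1, chi_sum]
  rw [← Fintype.piFinset_univ,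
    Finset.sum_prod_piFinset univ (fun (i : Fin k) (y : F) => χ (s * y ^ 2 + y * u i))]
  simp_rw [complete_sq h2 hs]
  rw [Finset.prod_mul_distrib, Finset.prod_const, Finset.card_univ, Fintype.card_fin]
  congr 1
  rw [← chi_sum]
  congr 1
  rw [nrm]
  simp [Finset.sum_neg_distrib, Finset.sum_mul]

lemma Msum_factor {k : ℕ} (s : F) (u v : Fin k → F) :
    ∑ M : (Fin k → F) × (Fin k → F),
        χ (s * nrmStar M + (∑ i, M.1 i * u i + ∑ i, M.2 i * v i))
      = (∑ m : Fin k → F, χ (s * nrm m + ∑ i, m i * u i))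
        * (∑ m' : Fin k → F, χ (-s * nrm m' + ∑ i, m' i * v i)) := by
  rw [Finset.sum_mul_sum, Fintype.sum_prod_type]
  refine Finset.sum_congr rfl fun m _ => Finset.sum_congr rfl fun m' _ => ?_
  rw [← AddChar.map_add_eq_mul]
  congr 1
  show s * (nrm m - nrm m') + _ = _
  ring

lemma swap4 {α : Type*} [DecidableEq α] (A : Finset α) (g : α × α → α × α → ℂ) :
    ∑ X ∈ A ×ˢ A, ∑ Y ∈ A ×ˢ A, g (Y.1, X.1) (Y.2, X.2)
      = ∑ p ∈ A ×ˢ A, ∑ p' ∈ A ×ˢ A, g p p' := by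
  rw [← Finset.sum_product', ← Finset.sum_product']
  refine Finset.sum_nbij' (fun z => ((z.2.1, z.1.1), (z.2.2, z.1.2)))
    (fun w => ((w.1.2, w.2.2), (w.1.1, w.2.1))) ?_ ?_ ?_ ?_ ?_
  · intro z hz; simp only [Finset.mem_product] at *; tauto
  · intro w hw; simp only [Finset.mem_product] at *; tauto
  · intro z _; rfl
  · intro w _; rfl
  · intro z _; rfl


noncomputable def Hfun {F : Type} [Field F] [Fintype F] {n : ℕ} (χ : AddChar F ℂ)
    (D : Finset (Fin n → F)) (r : F) : ℂ :=
  ∑ X ∈ D ×ˢ D, ∑ Y ∈ D ×ˢ D, χ (r * (nrm (Y.2 - X.2) - nrm (Y.1 - X.1)))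

noncomputable def FFun {F : Type} [Field F] [Fintype F] {n : ℕ} (χ : AddChar F ℂ)
    (D : Finset (Fin n → F)) (s : F) : ℂ :=
  ∑ X ∈ D ×ˢ D, ∑ Y ∈ D ×ˢ D,
    (∑ m : Fin n → F, χ (s * nrm m + ∑ i, m i * (Y.1 - X.1) i))
      * (∑ m' : Fin n → F, χ (-s * nrm m' + ∑ i, m' i * (Y.2 - X.2) i))

lemma H_zero {n : ℕ} (D : Finset (Fin n → F)) :
    Hfun χ D 0 = (D.card : ℂ) ^ 4 := by
  simp only [Hfun, zero_mul, AddChar.map_zero_eq_one, Finset.sum_const, Finset.card_product,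
    nsmul_eq_mul, mul_one]
  push_cast
  ring

lemma FF_zero {n : ℕ} (hχ : χ ≠ 1) (D : Finset (Fin n → F)) :
    FFun χ D 0 = (Fintype.card F : ℂ) ^ (2 * n) * (D.card : ℂ) ^ 2 := by
  have hz : ∀ u : Fin n → F,
      ∑ m : Fin n → F, χ ((0 : F) * nrm m + ∑ i, m i * u i)
        = if u = 0 then ((Fintype.card F : ℂ)) ^ n else 0 := by
    intro u
    simp only [zero_mul, zero_add]
    exact vec_ortho hχ u
  have hz' : ∀ u : Fin n → F,
      ∑ m : Fin n → F, χ (-(0 : F) * nrm m + ∑ i, m i * u i)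
        = if u = 0 then ((Fintype.card F : ℂ)) ^ n else 0 := by
    intro u; rw [neg_zero]; exact hz u
  rw [FFun]
  have hterm : ∀ X Y : (Fin n → F) × (Fin n → F),
      (∑ m : Fin n → F, χ ((0:F) * nrm m + ∑ i, m i * (Y.1 - X.1) i))
        * (∑ m' : Fin n → F, χ (-(0:F) * nrm m' + ∑ i, m' i * (Y.2 - X.2) i))
      = if Y = X then ((Fintype.card F : ℂ)) ^ n * ((Fintype.card F : ℂ)) ^ n else 0 := by
    intro X Y
    rw [hz, hz']
    simp only [sub_eq_zero]
    by_cases h1 : Y.1 = X.1 <;> by_cases h2 : Y.2 = X.2 <;>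
      simp [Prod.ext_iff, h1, h2]
  calc ∑ X ∈ D ×ˢ D, ∑ Y ∈ D ×ˢ D,
        (∑ m : Fin n → F, χ ((0:F) * nrm m + ∑ i, m i * (Y.1 - X.1) i))
          * (∑ m' : Fin n → F, χ (-(0:F) * nrm m' + ∑ i, m' i * (Y.2 - X.2) i))
      = ∑ X ∈ D ×ˢ D, ∑ Y ∈ D ×ˢ D,
          (if Y = X then ((Fintype.card F : ℂ)) ^ n * ((Fintype.card F : ℂ)) ^ n else 0) :=
        Finset.sum_congr rfl fun X _ => Finset.sum_congr rfl fun Y _ => hterm X Y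
    _ = ∑ X ∈ D ×ˢ D, ((Fintype.card F : ℂ)) ^ n * ((Fintype.card F : ℂ)) ^ n := by
        refine Finset.sum_congr rfl fun X hX => ?_
        rw [Finset.sum_ite_eq' (D ×ˢ D) X, if_pos hX]
    _ = (Fintype.card F : ℂ) ^ (2 * n) * (D.card : ℂ) ^ 2 := by
        rw [Finset.sum_const, Finset.card_product, nsmul_eq_mul, ← pow_add]
        push_cast
        ring_nf

lemma FF_ne {n : ℕ} (hχ : χ ≠ 1) (h2 : (2 : F) ≠ 0) (D : Finset (Fin n → F))
    {s : F} (hs : s ≠ 0) :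
    FFun χ D s = (Fintype.card F : ℂ) ^ n * Hfun χ D (4 * s)⁻¹ := by
  rw [FFun, Hfun, Finset.mul_sum]
  refine Finset.sum_congr rfl fun X _ => ?_
  rw [Finset.mul_sum]
  refine Finset.sum_congr rfl fun Y _ => ?_
  rw [vec_complete hχ h2 hs (Y.1 - X.1),
    vec_complete hχ h2 (neg_ne_zero.mpr hs) (Y.2 - X.2)]
  rw [mul_mul_mul_comm, ← mul_pow]
  have hG : (∑ a : F, χ (s * a ^ 2)) * (∑ a : F, χ (-s * a ^ 2)) = (Fintype.card F : ℂ) := by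
    have : ∀ a : F, (-s) * a ^ 2 = -(s * a ^ 2) := fun a => by ring
    simp_rw [this]
    exact gauss_mul hχ h2 hs
  rw [hG, ← AddChar.map_add_eq_mul]
  have harg : -(nrm (Y.1 - X.1) * (4 * s)⁻¹) + -(nrm (Y.2 - X.2) * (4 * -s)⁻¹)
      = (4 * s)⁻¹ * (nrm (Y.2 - X.2) - nrm (Y.1 - X.1)) := by
    rw [mul_neg, inv_neg]
    ring
  rw [harg]
  ring

lemma H_sum {n : ℕ} (hχ : χ ≠ 1) (D : Finset (Fin n → F)) :
    ∑ r : F, Hfun χ D r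
      = (Fintype.card F : ℂ)
        * ∑ t : F, (((D ×ˢ D).filter (fun p => nrm (p.1 - p.2) = t)).card : ℂ) ^ 2 := by
  have hν : ∀ t : F,
      ((((D ×ˢ D).filter fun p => nrm (p.1 - p.2) = t).card : ℂ))
        = ∑ p ∈ D ×ˢ D, if nrm (p.1 - p.2) = t then (1 : ℂ) else 0 := by
    intro t
    rw [Finset.card_filter]
    push_cast
    rfl
  have hinner : ∀ p p' : (Fin n → F) × (Fin n → F),
      ∑ t : F, (if nrm (p.1 - p.2) = t then (1:ℂ) else 0)
          * (if nrm (p'.1 - p'.2) = t then (1:ℂ) else 0)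
        = if nrm (p'.1 - p'.2) - nrm (p.1 - p.2) = 0 then (1:ℂ) else 0 := by
    intro p p'
    simp only [ite_mul, one_mul, zero_mul]
    rw [Finset.sum_ite_eq, if_pos (Finset.mem_univ _)]
    simp only [sub_eq_zero]
  calc ∑ r : F, Hfun χ D r
      = ∑ X ∈ D ×ˢ D, ∑ Y ∈ D ×ˢ D, ∑ r : F,
          χ (r * (nrm (Y.2 - X.2) - nrm (Y.1 - X.1))) := by
        simp only [Hfun]
        rw [Finset.sum_comm]
        exact Finset.sum_congr rfl fun X _ => Finset.sum_comm
    _ = ∑ X ∈ D ×ˢ D, ∑ Y ∈ D ×ˢ D,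
          (if nrm (Y.2 - X.2) - nrm (Y.1 - X.1) = 0 then (Fintype.card F : ℂ) else 0) :=
        Finset.sum_congr rfl fun X _ => Finset.sum_congr rfl fun Y _ => ortho hχ _
    _ = ∑ p ∈ D ×ˢ D, ∑ p' ∈ D ×ˢ D,
          (if nrm (p'.1 - p'.2) - nrm (p.1 - p.2) = 0 then (Fintype.card F : ℂ) else 0) :=
        swap4 D (fun p p' => if nrm (p'.1 - p'.2) - nrm (p.1 - p.2) = 0
          then (Fintype.card F : ℂ) else 0)
    _ = (Fintype.card F : ℂ)
        * ∑ t : F, (((D ×ˢ D).filter (fun p => nrm (p.1 - p.2) = t)).card : ℂ) ^ 2 := by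
        symm
        simp_rw [hν, sq, Finset.sum_mul_sum, Finset.mul_sum]
        rw [Finset.sum_comm]
        refine Finset.sum_congr rfl fun p _ => ?_
        rw [Finset.sum_comm]
        refine Finset.sum_congr rfl fun p' _ => ?_
        rw [← Finset.mul_sum, hinner p p', mul_ite, mul_one, mul_zero]

lemma FF_total {n : ℕ} (hχ : χ ≠ 1) (D : Finset (Fin n → F)) :
    (Fintype.card F : ℂ) ^ (4 * n + 1)
      * ∑ M ∈ univ.filter (fun M : (Fin n → F) × (Fin n → F) => nrmStar M = 0),
          ftDD χ D M * (starRingEnd ℂ) (ftDD χ D M)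
    = ∑ s : F, FFun χ D s := by
  have hq0 : (Fintype.card F : ℂ) ≠ 0 := Nat.cast_ne_zero.mpr Fintype.card_ne_zero
  have step2 : ∀ M : (Fin n → F) × (Fin n → F),
      ftDD χ D M * (starRingEnd ℂ) (ftDD χ D M)
      = ((Fintype.card F : ℂ) ^ (4 * n))⁻¹
        * ∑ X ∈ D ×ˢ D, ∑ Y ∈ D ×ˢ D,
            χ (∑ i, M.1 i * (Y.1 - X.1) i + ∑ i, M.2 i * (Y.2 - X.2) i) := by
    intro M
    simp only [ftDD]
    rw [map_mul, map_inv₀, map_pow, map_natCast, map_sum]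
    simp_rw [conj_chi, neg_neg]
    rw [mul_mul_mul_comm]
    congr 1
    · rw [← mul_inv, ← pow_add]
      congr 2
      ring
    · rw [Finset.sum_mul_sum]
      refine Finset.sum_congr rfl fun X _ => Finset.sum_congr rfl fun Y _ => ?_
      rw [← AddChar.map_add_eq_mul]
      congr 1
      simp only [Pi.sub_apply, mul_sub]
      rw [Finset.sum_sub_distrib, Finset.sum_sub_distrib]
      ring
  have step1 : ∑ M : (Fin n → F) × (Fin n → F),
      (∑ s : F, χ (s * nrmStar M)) * (ftDD χ D M * (starRingEnd ℂ) (ftDD χ D M))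
      = (Fintype.card F : ℂ)
        * ∑ M ∈ univ.filter (fun M : (Fin n → F) × (Fin n → F) => nrmStar M = 0),
            ftDD χ D M * (starRingEnd ℂ) (ftDD χ D M) := by
    simp_rw [ortho hχ, ite_mul, zero_mul]
    rw [Finset.mul_sum, Finset.sum_filter]
  calc (Fintype.card F : ℂ) ^ (4 * n + 1)
        * ∑ M ∈ univ.filter (fun M : (Fin n → F) × (Fin n → F) => nrmStar M = 0),
            ftDD χ D M * (starRingEnd ℂ) (ftDD χ D M)
      = (Fintype.card F : ℂ) ^ (4 * n)
        * ((Fintype.card F : ℂ)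
          * ∑ M ∈ univ.filter (fun M : (Fin n → F) × (Fin n → F) => nrmStar M = 0),
              ftDD χ D M * (starRingEnd ℂ) (ftDD χ D M)) := by
        rw [pow_succ]; ring
    _ = (Fintype.card F : ℂ) ^ (4 * n)
        * ∑ M : (Fin n → F) × (Fin n → F),
            (∑ s : F, χ (s * nrmStar M)) * (ftDD χ D M * (starRingEnd ℂ) (ftDD χ D M)) := by
        rw [← step1]
    _ = ∑ M : (Fin n → F) × (Fin n → F),
          (∑ s : F, χ (s * nrmStar M))
            * ∑ X ∈ D ×ˢ D, ∑ Y ∈ D ×ˢ D,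
                χ (∑ i, M.1 i * (Y.1 - X.1) i + ∑ i, M.2 i * (Y.2 - X.2) i) := by
        rw [Finset.mul_sum]
        refine Finset.sum_congr rfl fun M _ => ?_
        rw [step2 M]
        have h4n : (Fintype.card F : ℂ) ^ (4 * n) ≠ 0 := pow_ne_zero _ hq0
        field_simp
        rw [mul_comm]; congr 1; exact Finset.sum_congr rfl fun x _ => by rw [mul_comm]
    _ = ∑ M : (Fin n → F) × (Fin n → F), ∑ s : F, ∑ X ∈ D ×ˢ D, ∑ Y ∈ D ×ˢ D,
          χ (s * nrmStar M
            + (∑ i, M.1 i * (Y.1 - X.1) i + ∑ i, M.2 i * (Y.2 - X.2) i)) := by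
        refine Finset.sum_congr rfl fun M _ => ?_
        rw [Finset.sum_mul]
        refine Finset.sum_congr rfl fun s _ => ?_
        rw [Finset.mul_sum]
        refine Finset.sum_congr rfl fun X _ => ?_
        rw [Finset.mul_sum]
        refine Finset.sum_congr rfl fun Y _ => ?_
        rw [← AddChar.map_add_eq_mul]
    _ = ∑ s : F, ∑ M : (Fin n → F) × (Fin n → F), ∑ X ∈ D ×ˢ D, ∑ Y ∈ D ×ˢ D,
          χ (s * nrmStar M
            + (∑ i, M.1 i * (Y.1 - X.1) i + ∑ i, M.2 i * (Y.2 - X.2) i)) :=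
        Finset.sum_comm
    _ = ∑ s : F, ∑ X ∈ D ×ˢ D, ∑ Y ∈ D ×ˢ D, ∑ M : (Fin n → F) × (Fin n → F),
          χ (s * nrmStar M
            + (∑ i, M.1 i * (Y.1 - X.1) i + ∑ i, M.2 i * (Y.2 - X.2) i)) := by
        refine Finset.sum_congr rfl fun s _ => ?_
        rw [Finset.sum_comm]
        exact Finset.sum_congr rfl fun X _ => Finset.sum_comm
    _ = ∑ s : F, FFun χ D s := by
        refine Finset.sum_congr rfl fun s _ => ?_
        simp only [FFun]
        refine Finset.sum_congr rfl fun X _ => Finset.sum_congr rfl fun Y _ => ?_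
        exact Msum_factor s (Y.1 - X.1) (Y.2 - X.2)

lemma master {n : ℕ} (hχ : χ ≠ 1) (h2 : (2 : F) ≠ 0) (D : Finset (Fin n → F)) :
    (Fintype.card F : ℂ) ^ (4 * n + 1)
      * ∑ M ∈ univ.filter (fun M : (Fin n → F) × (Fin n → F) => nrmStar M = 0),
          ftDD χ D M * (starRingEnd ℂ) (ftDD χ D M)
    = (Fintype.card F : ℂ) ^ (2 * n) * (D.card : ℂ) ^ 2
      + (Fintype.card F : ℂ) ^ n
        * ((Fintype.card F : ℂ)
            * (∑ t : F, (((D ×ˢ D).filter (fun p => nrm (p.1 - p.2) = t)).card : ℂ) ^ 2)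
          - (D.card : ℂ) ^ 4) := by
  have h4 : (4 : F) ≠ 0 := by
    have h : (4 : F) = 2 * 2 := by norm_num
    rw [h]; exact mul_ne_zero h2 h2
  rw [FF_total hχ D]
  rw [← Finset.add_sum_erase univ (FFun χ D) (Finset.mem_univ 0)]
  congr 1
  · rw [FF_zero hχ D]
  · have hstep : ∀ s ∈ Finset.univ.erase (0 : F),
        FFun χ D s = (Fintype.card F : ℂ) ^ n * Hfun χ D (4 * s)⁻¹ := by
      intro s hs
      exact FF_ne hχ h2 D (Finset.mem_erase.mp hs).1
    rw [Finset.sum_congr rfl hstep, ← Finset.mul_sum]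
    congr 1
    have hre : ∑ s ∈ Finset.univ.erase (0 : F), Hfun χ D (4 * s)⁻¹
        = ∑ r ∈ Finset.univ.erase (0 : F), Hfun χ D r := by
      refine Finset.sum_nbij' (fun s => (4 * s)⁻¹) (fun r => (4 * r)⁻¹) ?_ ?_ ?_ ?_ ?_
      · intro s hs
        rw [Finset.mem_erase] at *
        exact ⟨inv_ne_zero (mul_ne_zero h4 hs.1), Finset.mem_univ _⟩
      · intro r hr
        rw [Finset.mem_erase] at *
        exact ⟨inv_ne_zero (mul_ne_zero h4 hr.1), Finset.mem_univ _⟩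
      · intro s hs
        have hs0 : s ≠ 0 := (Finset.mem_erase.mp hs).1
        field_simp
      · intro r hr
        have hr0 : r ≠ 0 := (Finset.mem_erase.mp hr).1
        field_simp
      · intro s _; rfl
    rw [hre]
    have := Finset.sum_erase_eq_sub (f := Hfun χ D) (Finset.mem_univ (0 : F))
    rw [this, H_zero D, H_sum hχ D]

/-- For `D ⊆ F_q^{2d}` with distance counting function `ν`,
`∑_t ν(t)² ≤ |D|⁴/q + q^{6d} ∑_{||M||_* = 0} |(D×D)^(M)|²`. -/
theorem stmt_11 {F : Type} [Field F] [Fintype F] [DecidableEq F]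
    (hodd : Odd (Fintype.card F)) (χ : AddChar F ℂ) (hχ : χ ≠ 1)
    (d : ℕ) (hd : 1 ≤ d) (D : Finset (Fin (2 * d) → F)) :
    ∑ t : F, (((D ×ˢ D).filter (fun p => nrm (p.1 - p.2) = t)).card : ℝ) ^ 2
      ≤ (D.card : ℝ) ^ 4 / (Fintype.card F : ℝ)
        + (Fintype.card F : ℝ) ^ (6 * d) *
            ∑ M ∈ univ.filter
                (fun M : (Fin (2 * d) → F) × (Fin (2 * d) → F) => nrmStar M = 0),
              ‖ftDD χ D M‖ ^ 2 := by
  have h2 : (2 : F) ≠ 0 := card_odd_two_ne_zero hodd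
  have hq0 : (Fintype.card F : ℂ) ≠ 0 := Nat.cast_ne_zero.mpr Fintype.card_ne_zero
  have hSc : ∑ M ∈ univ.filter
        (fun M : (Fin (2 * d) → F) × (Fin (2 * d) → F) => nrmStar M = 0),
        ftDD χ D M * (starRingEnd ℂ) (ftDD χ D M)
      = ((∑ M ∈ univ.filter
            (fun M : (Fin (2 * d) → F) × (Fin (2 * d) → F) => nrmStar M = 0),
            ‖ftDD χ D M‖ ^ 2 : ℝ) : ℂ) := by
    push_cast
    refine Finset.sum_congr rfl fun M _ => ?_
    rw [Complex.mul_conj, ← Complex.sq_norm, Complex.ofReal_pow]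
  have hνc : ∑ t : F, (((D ×ˢ D).filter (fun p => nrm (p.1 - p.2) = t)).card : ℂ) ^ 2
      = ((∑ t : F, (((D ×ˢ D).filter (fun p => nrm (p.1 - p.2) = t)).card : ℝ) ^ 2 : ℝ) : ℂ) := by
    push_cast
    rfl
  have hC : (Fintype.card F : ℂ) ^ (6 * d + 1)
        * ∑ M ∈ univ.filter
            (fun M : (Fin (2 * d) → F) × (Fin (2 * d) → F) => nrmStar M = 0),
            ftDD χ D M * (starRingEnd ℂ) (ftDD χ D M)
      = (Fintype.card F : ℂ) ^ (2 * d) * (D.card : ℂ) ^ 2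
        + (Fintype.card F : ℂ)
            * (∑ t : F, (((D ×ˢ D).filter (fun p => nrm (p.1 - p.2) = t)).card : ℂ) ^ 2)
        - (D.card : ℂ) ^ 4 := by
    have hm := master hχ h2 D
    have h1 : (Fintype.card F : ℂ) ^ (4 * (2 * d) + 1)
        = (Fintype.card F : ℂ) ^ (2 * d) * (Fintype.card F : ℂ) ^ (6 * d + 1) := by
      rw [← pow_add]; congr 1; ring
    have h2' : (Fintype.card F : ℂ) ^ (2 * (2 * d))
        = (Fintype.card F : ℂ) ^ (2 * d) * (Fintype.card F : ℂ) ^ (2 * d) := by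
      rw [← pow_add]; congr 1; ring
    have h3 : (Fintype.card F : ℂ) ^ (2 * d) ≠ 0 := pow_ne_zero _ hq0
    apply mul_left_cancel₀ h3
    rw [← mul_assoc, ← h1, hm, h2']
    ring
  rw [hSc, hνc] at hC
  have hR : (Fintype.card F : ℝ) ^ (6 * d + 1)
        * ∑ M ∈ univ.filter
            (fun M : (Fin (2 * d) → F) × (Fin (2 * d) → F) => nrmStar M = 0),
            ‖ftDD χ D M‖ ^ 2
      = (Fintype.card F : ℝ) ^ (2 * d) * (D.card : ℝ) ^ 2
        + (Fintype.card F : ℝ)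
            * ∑ t : F, (((D ×ˢ D).filter (fun p => nrm (p.1 - p.2) = t)).card : ℝ) ^ 2
        - (D.card : ℝ) ^ 4 := by
    exact_mod_cast hC
  have hqpos : (0 : ℝ) < (Fintype.card F : ℝ) := by
    exact_mod_cast Fintype.card_pos
  rw [← mul_le_mul_iff_of_pos_left hqpos]
  have hexp : (Fintype.card F : ℝ)
        * ((D.card : ℝ) ^ 4 / (Fintype.card F : ℝ)
          + (Fintype.card F : ℝ) ^ (6 * d) *
              ∑ M ∈ univ.filter
                  (fun M : (Fin (2 * d) → F) × (Fin (2 * d) → F) => nrmStar M = 0),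
                ‖ftDD χ D M‖ ^ 2)
      = (D.card : ℝ) ^ 4
        + (Fintype.card F : ℝ) ^ (6 * d + 1) *
            ∑ M ∈ univ.filter
                (fun M : (Fin (2 * d) → F) × (Fin (2 * d) → F) => nrmStar M = 0),
              ‖ftDD χ D M‖ ^ 2 := by
    rw [pow_succ]
    field_simp
    ring
  rw [hexp]
  have hpos : (0 : ℝ) ≤ (Fintype.card F : ℝ) ^ (2 * d) * (D.card : ℝ) ^ 2 := by positivity
  linarith
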